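/- Let K be an algebraically closed field of characteristic zero, W an n-dimensional K-vector space, and p a natural number. Let φ_p : K[S_p] → End_K(W^{⊗p}) be the algebra homomorphism sending σ ∈ S_p to the permutation operator L_σ(w_1 ⊗ ⋯ ⊗ w_p) = w_{σ^{-1}(1)} ⊗ ⋯ ⊗ w_{σ^{-1}(p)}. If p ≤ n then φ_p is injective. If p > n then the kernel of φ_p is the two-sided ideal of K[S_p] generated by the antisymmetrizer A_{n+1} = (1/(n+1)!) Σ_{σ ∈ S_{n+1}} sgn(σ)σ, where S_{n+1} is embedded in S_p as the permutations fixing the letters n+2, …, p. -/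

import Mathlib

open scoped TensorProduct

universe u

/-- The permutation operator `L_σ : w₁ ⊗ ⋯ ⊗ w_p ↦ w_{σ⁻¹(1)} ⊗ ⋯ ⊗ w_{σ⁻¹(p)}` on the
`p`-th tensor power, as a monoid homomorphism `S_p →* End(W^{⊗p})`. -/
noncomputable def permRep (K : Type u) [Field K] (W : Type u) [AddCommGroup W] [Module K W]
    (p : ℕ) : Equiv.Perm (Fin p) →* Module.End K (⨂[K] (_ : Fin p), W) where
  toFun σ := (PiTensorProduct.reindex K (fun _ : Fin p => W) σ).toLinearMap
  map_one' := by
    have := PiTensorProduct.reindex_refl (R := K) (s := fun _ : Fin p => W)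
    exact congrArg LinearEquiv.toLinearMap this
  map_mul' σ τ := by
    refine LinearMap.ext fun x => ?_
    have h := PiTensorProduct.reindex_reindex (R := K) (s := fun _ : Fin p => W) τ σ x
    simpa [Equiv.Perm.mul_def, Module.End.mul_apply] using h.symm

/-- The algebra homomorphism `φ_p : K[S_p] → End(W^{⊗p})` induced by `σ ↦ L_σ`. -/
noncomputable def permAlgHom (K : Type u) [Field K] (W : Type u) [AddCommGroup W] [Module K W]
    (p : ℕ) :
    MonoidAlgebra K (Equiv.Perm (Fin p)) →ₐ[K] Module.End K (⨂[K] (_ : Fin p), W) :=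
  MonoidAlgebra.lift K (Module.End K (⨂[K] (_ : Fin p), W)) (Equiv.Perm (Fin p))
    (permRep K W p)

/-- The antisymmetrizer `A_{n+1} = (1/(n+1)!) Σ_{σ ∈ S_{n+1}} sgn(σ) σ`, where `S_{n+1}`
is embedded in `S_p` as the permutations fixing the letters `n+2, …, p`. -/
noncomputable def antisymmetrizer (K : Type u) [Field K] (n p : ℕ) (h : n + 1 ≤ p) :
    MonoidAlgebra K (Equiv.Perm (Fin p)) :=
  ((Nat.factorial (n + 1) : K)⁻¹) •
    ∑ σ : Equiv.Perm (Fin (n + 1)),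
      (((Equiv.Perm.sign σ : ℤ) : K) •
        MonoidAlgebra.of K (Equiv.Perm (Fin p))
          (σ.viaFintypeEmbedding (Fin.castLEEmb h)))

namespace SWaux


lemma geom_bound (p : ℕ) (hp : 0 < p) (m : ℕ) :
    ∑ k ∈ Finset.range m, (p - 1) * p ^ k < p ^ m := by
  induction m with
  | zero => simp
  | succ m ih =>
    rw [Finset.sum_range_succ, pow_succ]
    calc ∑ k ∈ Finset.range m, (p-1) * p ^ k + (p-1) * p ^ m
        < p ^ m + (p-1) * p ^ m := by omega
      _ = (1 + (p-1)) * p ^ m := by ring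
      _ = p ^ m * p := by rw [show 1 + (p-1) = p by omega]; ring

def lexVal {p : ℕ} (σ : Equiv.Perm (Fin p)) : ℕ :=
  ∑ i : Fin p, (σ i : ℕ) * p ^ (p - 1 - (i : ℕ))

lemma lexVal_lt {p : ℕ} (u v : Equiv.Perm (Fin p)) (i : Fin p)
    (hagree : ∀ j : Fin p, j < i → u j = v j) (hlt : u i < v i) :
    lexVal u < lexVal v := by
  classical
  have hp : 0 < p := i.pos
  -- tail bound
  have tail : ∀ w : Equiv.Perm (Fin p),
      ∑ j ∈ Finset.univ.filter (fun j : Fin p => i < j), (w j : ℕ) * p ^ (p - 1 - (j : ℕ))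
        < p ^ (p - 1 - (i : ℕ)) := by
    intro w
    calc ∑ j ∈ Finset.univ.filter (fun j : Fin p => i < j), (w j : ℕ) * p ^ (p - 1 - (j : ℕ))
        ≤ ∑ j ∈ Finset.univ.filter (fun j : Fin p => i < j), (p - 1) * p ^ (p - 1 - (j : ℕ)) := by
          apply Finset.sum_le_sum
          intro j _
          have := (w j).isLt
          exact Nat.mul_le_mul_right _ (by omega)
      _ = ∑ k ∈ Finset.range (p - 1 - (i : ℕ)), (p - 1) * p ^ k := by
          apply Finset.sum_nbij' (i := fun j : Fin p => p - 1 - (j : ℕ))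
            (j := fun k : ℕ => (⟨p - 1 - k, by omega⟩ : Fin p))
          · intro j hj
            simp only [Finset.mem_filter, Finset.mem_univ, true_and, Fin.lt_def] at hj
            simp only [Finset.mem_range]
            have := j.isLt
            omega
          · intro k hk
            simp only [Finset.mem_range] at hk
            simp only [Finset.mem_filter, Finset.mem_univ, true_and]
            have := i.isLt
            rw [Fin.lt_def]
            simp only []
            omega
          · intro j hj
            simp only [Finset.mem_filter, Finset.mem_univ, true_and, Fin.lt_def] at hj
            have := j.isLt
            apply Fin.ext
            simp only []
            omega
          · intro k hk
            simp only [Finset.mem_range] at hk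
            simp only []
            omega
          · intro j hj; rfl
      _ < p ^ (p - 1 - (i : ℕ)) := geom_bound p hp _
  have split : ∀ w : Equiv.Perm (Fin p), lexVal w =
      (∑ j ∈ Finset.univ.filter (fun j : Fin p => j < i), (w j : ℕ) * p ^ (p - 1 - (j : ℕ)))
      + ((w i : ℕ) * p ^ (p - 1 - (i : ℕ))
      + ∑ j ∈ Finset.univ.filter (fun j : Fin p => i < j), (w j : ℕ) * p ^ (p - 1 - (j : ℕ))) := by
    intro w
    rw [lexVal]
    rw [← Finset.sum_filter_add_sum_filter_not Finset.univ (fun j : Fin p => j < i)]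
    congr 1
    rw [← Finset.sum_filter_add_sum_filter_not (Finset.univ.filter (fun j : Fin p => ¬ j < i))
      (fun j : Fin p => j = i)]
    congr 1
    · rw [Finset.filter_filter]
      rw [show (Finset.univ.filter fun j : Fin p => ¬j < i ∧ j = i) = {i} by
        ext j
        simp only [Finset.mem_filter, Finset.mem_univ, true_and, Finset.mem_singleton]
        constructor
        · rintro ⟨-, h⟩; exact h
        · intro h; subst h; exact ⟨lt_irrefl _, rfl⟩]
      simp
    · congr 1
      ext j
      simp only [Finset.filter_filter, Finset.mem_filter, Finset.mem_univ, true_and]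
      constructor
      · rintro ⟨h1, h2⟩; exact lt_of_le_of_ne (not_lt.mp h1) (Ne.symm h2)
      · intro h; exact ⟨not_lt.mpr (le_of_lt h), ne_of_gt h⟩
  rw [split u, split v]
  have head : (∑ j ∈ Finset.univ.filter (fun j : Fin p => j < i), (u j : ℕ) * p ^ (p - 1 - (j : ℕ)))
      = ∑ j ∈ Finset.univ.filter (fun j : Fin p => j < i), (v j : ℕ) * p ^ (p - 1 - (j : ℕ)) := by
    apply Finset.sum_congr rfl
    intro j hj
    simp only [Finset.mem_filter, Finset.mem_univ, true_and] at hj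
    rw [hagree j hj]
  rw [head]
  apply Nat.add_lt_add_left
  calc (u i : ℕ) * p ^ (p - 1 - (i : ℕ))
        + ∑ j ∈ Finset.univ.filter (fun j : Fin p => i < j), (u j : ℕ) * p ^ (p - 1 - (j : ℕ))
      < (u i : ℕ) * p ^ (p - 1 - (i : ℕ)) + p ^ (p - 1 - (i : ℕ)) := by
        exact Nat.add_lt_add_left (tail u) _
    _ = ((u i : ℕ) + 1) * p ^ (p - 1 - (i : ℕ)) := by ring
    _ ≤ (v i : ℕ) * p ^ (p - 1 - (i : ℕ)) := Nat.mul_le_mul_right _ (by exact_mod_cast hlt)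
    _ ≤ _ := Nat.le_add_right _ _



def IsColorable (n : ℕ) {p : ℕ} (σ : Equiv.Perm (Fin p)) : Prop :=
  ∃ f : Fin p → Fin n, ∀ i j : Fin p, i < j → f i = f j → σ i < σ j

/-- Either `σ` admits an `n`-coloring with increasing values on color classes, or it has a
decreasing subsequence of length `n+1`. -/
lemma colorable_or_decreasing (n : ℕ) {p : ℕ} (σ : Equiv.Perm (Fin p)) :
    IsColorable n σ ∨ ∃ s : Fin (n + 1) → Fin p, StrictMono s ∧
      ∀ a b : Fin (n + 1), a < b → σ (s b) < σ (s a) := by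
  classical
  -- P k i : there is a decreasing subsequence of length k all positions ≤ i, all values ≥ σ i
  set P : ℕ → Fin p → Prop := fun k i => ∃ s : Fin k → Fin p, StrictMono s ∧
    (∀ a b : Fin k, a < b → σ (s b) < σ (s a)) ∧ (∀ a, s a ≤ i ∧ σ i ≤ σ (s a)) with hP
  have hP1 : ∀ i, P 1 i := by
    intro i
    exact ⟨fun _ => i, Subsingleton.strictMono _, fun a b hab => absurd hab (by omega),
      fun a => ⟨le_refl _, le_refl _⟩⟩
  have hPbound : ∀ k i, P k i → k ≤ p := by
    rintro k i ⟨s, hs, -, -⟩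
    simpa using Fintype.card_le_of_injective s hs.injective
  have hPext : ∀ k i j, P k i → i < j → σ j < σ i → P (k + 1) j := by
    rintro k i j ⟨s, hs, hanti, hbd⟩ hij hval
    refine ⟨Fin.snoc s j, ?_, ?_, ?_⟩
    · intro a b hab
      rcases Fin.eq_castSucc_or_eq_last b with ⟨b', rfl⟩ | rfl
      · have ha' : ∃ a', a = Fin.castSucc a' := Fin.eq_castSucc_or_eq_last a |>.resolve_right
          (by rintro rfl; exact absurd hab (not_lt.mpr (Fin.le_last _)))
        obtain ⟨a', rfl⟩ := ha'
        simpa [Fin.snoc_castSucc] using hs (by exact_mod_cast hab)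
      · have ha' : ∃ a', a = Fin.castSucc a' := Fin.eq_castSucc_or_eq_last a |>.resolve_right
          (by rintro rfl; exact absurd hab (lt_irrefl _))
        obtain ⟨a', rfl⟩ := ha'
        simp only [Fin.snoc_castSucc, Fin.snoc_last]
        exact lt_of_le_of_lt (hbd a').1 hij
    · intro a b hab
      rcases Fin.eq_castSucc_or_eq_last b with ⟨b', rfl⟩ | rfl
      · have ha' : ∃ a', a = Fin.castSucc a' := Fin.eq_castSucc_or_eq_last a |>.resolve_right
          (by rintro rfl; exact absurd hab (not_lt.mpr (Fin.le_last _)))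
        obtain ⟨a', rfl⟩ := ha'
        simpa [Fin.snoc_castSucc] using hanti a' b' (by exact_mod_cast hab)
      · have ha' : ∃ a', a = Fin.castSucc a' := Fin.eq_castSucc_or_eq_last a |>.resolve_right
          (by rintro rfl; exact absurd hab (lt_irrefl _))
        obtain ⟨a', rfl⟩ := ha'
        simp only [Fin.snoc_castSucc, Fin.snoc_last]
        exact lt_of_lt_of_le hval (hbd a').2
    · intro a
      rcases Fin.eq_castSucc_or_eq_last a with ⟨a', rfl⟩ | rfl
      · simp only [Fin.snoc_castSucc]
        exact ⟨le_of_lt (lt_of_le_of_lt (hbd a').1 hij), le_of_lt (lt_of_lt_of_le hval (hbd a').2)⟩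
      · simp only [Fin.snoc_last]
        exact ⟨le_refl _, le_refl _⟩
  set D : Fin p → ℕ := fun i => Nat.findGreatest (fun k => P k i) p with hD
  have hD1 : ∀ i, 1 ≤ D i := fun i => Nat.le_findGreatest (by have := i.pos; omega) (hP1 i)
  have hDspec : ∀ i, P (D i) i := by
    intro i
    exact Nat.findGreatest_spec (P := fun k => P k i) (m := 1) (by have := i.pos; omega) (hP1 i)
  by_cases hbig : ∃ i, n + 1 ≤ D i
  · obtain ⟨i, hi⟩ := hbig
    right
    obtain ⟨s, hs, hanti, -⟩ := hDspec i
    refine ⟨s ∘ Fin.castLE hi, hs.comp (Fin.strictMono_castLE hi), fun a b hab => ?_⟩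
    exact hanti _ _ (by exact_mod_cast hab)
  · left
    push_neg at hbig
    refine ⟨fun i => ⟨D i - 1, by have := hbig i; have := hD1 i; omega⟩, ?_⟩
    intro i j hij hcolor
    have hDij : D i = D j := by
      have := hD1 i; have := hD1 j
      have : D i - 1 = D j - 1 := congrArg Fin.val hcolor
      omega
    by_contra hle
    push_neg at hle
    have hne : σ i ≠ σ j := fun h => (ne_of_lt hij) (σ.injective h)
    have hgt : σ j < σ i := lt_of_le_of_ne hle (Ne.symm hne)
    have : P (D i + 1) j := hPext _ _ _ (hDspec i) hij hgt
    have : D i + 1 ≤ D j := Nat.le_findGreatest (hPbound _ _ this) this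
    omega

/-- If `f` is a coloring for `σ₀` and `σ` has the same colored content (`f∘σ⁻¹ = f∘σ₀⁻¹`)
but `σ ≠ σ₀`, then `σ` is lexicographically larger. -/
lemma coset_lex {n p : ℕ} (σ₀ σ : Equiv.Perm (Fin p)) (f : Fin p → Fin n)
    (hf : ∀ i j : Fin p, i < j → f i = f j → σ₀ i < σ₀ j)
    (hcond : ∀ v : Fin p, f (σ⁻¹ v) = f (σ₀⁻¹ v)) (hne : σ ≠ σ₀) :
    ∃ i : Fin p, (∀ j : Fin p, j < i → σ j = σ₀ j) ∧ σ₀ i < σ i := by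
  classical
  have hex : (Finset.univ.filter (fun j : Fin p => σ j ≠ σ₀ j)).Nonempty := by
    by_contra hempty
    rw [Finset.not_nonempty_iff_eq_empty, Finset.filter_eq_empty_iff] at hempty
    exact hne (Equiv.ext fun j => not_not.mp (hempty (Finset.mem_univ j)))
  set i := (Finset.univ.filter (fun j : Fin p => σ j ≠ σ₀ j)).min' hex with hi
  have hi_mem := (Finset.univ.filter (fun j : Fin p => σ j ≠ σ₀ j)).min'_mem hex
  rw [Finset.mem_filter] at hi_mem
  have hagree : ∀ j : Fin p, j < i → σ j = σ₀ j := by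
    intro j hj
    by_contra hne'
    exact absurd (Finset.min'_le _ j (Finset.mem_filter.mpr ⟨Finset.mem_univ _, hne'⟩))
      (not_le.mpr hj)
  refine ⟨i, hagree, ?_⟩
  set j' := σ₀⁻¹ (σ i) with hj'
  have hσ₀j' : σ₀ j' = σ i := σ₀.apply_symm_apply _
  have hcol : f i = f j' := by
    have := hcond (σ i)
    rwa [Equiv.Perm.inv_def σ, Equiv.symm_apply_apply] at this
  have hj'ne : j' ≠ i := by
    intro h
    rw [h] at hσ₀j'
    exact hi_mem.2 hσ₀j'.symm
  have hij' : i < j' := by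
    rcases lt_or_gt_of_ne hj'ne with h | h
    · exfalso
      have : σ j' = σ₀ j' := hagree j' h
      rw [hσ₀j'] at this
      exact hj'ne (σ.injective this)
    · exact h
  have := hf i j' hij' hcol
  rwa [hσ₀j'] at this



variable {K : Type u} [Field K] {W : Type u} [AddCommGroup W] [Module K W]
  {n p : ℕ} (b : Module.Basis (Fin n) K W)

lemma permRep_tprod (σ : Equiv.Perm (Fin p)) (v : Fin p → W) :
    permRep K W p σ (PiTensorProduct.tprod K v) = PiTensorProduct.tprod K (v ∘ ⇑σ⁻¹) := by
  show (PiTensorProduct.reindex K (fun _ : Fin p => W) σ) (PiTensorProduct.tprod K v) = _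
  rw [PiTensorProduct.reindex_tprod]
  rfl

lemma permAlgHom_apply_tprod (a : MonoidAlgebra K (Equiv.Perm (Fin p))) (v : Fin p → W) :
    permAlgHom K W p a (PiTensorProduct.tprod K v)
      = ∑ σ : Equiv.Perm (Fin p), a.coeff σ • PiTensorProduct.tprod K (v ∘ ⇑σ⁻¹) := by
  classical
  rw [permAlgHom, MonoidAlgebra.lift_apply, Finsupp.sum]
  rw [LinearMap.sum_apply]
  rw [Finset.sum_subset (Finset.subset_univ a.coeff.support)]
  · apply Finset.sum_congr rfl
    intro σ _
    rw [LinearMap.smul_apply, permRep_tprod]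
  · intro σ _ hσ
    rw [Finsupp.notMem_support_iff.mp hσ]
    simp

end SWaux

namespace SWaux2
open SWaux
variable {K : Type u} [Field K] {W : Type u} [AddCommGroup W] [Module K W]
  {n p : ℕ}

noncomputable def dualFun (b : Module.Basis (Fin n) K W) (g : Fin p → Fin n) : (⨂[K] (_ : Fin p), W) →ₗ[K] K :=
  PiTensorProduct.lift ((MultilinearMap.mkPiAlgebra K (Fin p) K).compLinearMap
    (fun i => b.coord (g i)))

lemma dualFun_tprod_basis (b : Module.Basis (Fin n) K W) (g f : Fin p → Fin n) :
    dualFun b g (PiTensorProduct.tprod K (fun i => b (f i))) = if f = g then 1 else 0 := by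
  classical
  rw [dualFun, PiTensorProduct.lift.tprod, MultilinearMap.compLinearMap_apply,
    MultilinearMap.mkPiAlgebra_apply]
  have h : ∀ i : Fin p, b.coord (g i) (b (f i)) = if f i = g i then 1 else 0 := by
    intro i
    rw [Module.Basis.coord_apply, Module.Basis.repr_self, Finsupp.single_apply]
  rw [Finset.prod_congr rfl (fun i _ => h i), Finset.prod_boole]
  by_cases hfg : f = g
  · rw [if_pos hfg, if_pos (fun i _ => congrFun hfg i)]
  · rw [if_neg hfg, if_neg]
    intro hall
    exact hfg (funext fun i => hall i (Finset.mem_univ i))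

lemma kernel_coords (b : Module.Basis (Fin n) K W) (a : MonoidAlgebra K (Equiv.Perm (Fin p)))
    (ha : permAlgHom K W p a = 0) (f g : Fin p → Fin n) :
    ∑ σ ∈ Finset.univ.filter (fun σ : Equiv.Perm (Fin p) => f ∘ ⇑σ⁻¹ = g), a.coeff σ = 0 := by
  classical
  have h1 : permAlgHom K W p a (PiTensorProduct.tprod K (fun i => b (f i))) = 0 := by
    rw [ha]; rfl
  rw [permAlgHom_apply_tprod] at h1
  have h2 := congrArg (dualFun b g) h1
  rw [map_sum, map_zero] at h2
  have h3 : ∀ σ : Equiv.Perm (Fin p),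
      dualFun b g (a.coeff σ • PiTensorProduct.tprod K ((fun i => b (f i)) ∘ ⇑σ⁻¹))
        = if f ∘ ⇑σ⁻¹ = g then a.coeff σ else 0 := by
    intro σ
    rw [map_smul]
    have he : ((fun i => b (f i)) ∘ ⇑σ⁻¹) = fun i => b ((f ∘ ⇑σ⁻¹) i) := rfl
    rw [he, dualFun_tprod_basis]
    simp only [smul_eq_mul, mul_ite, mul_one, mul_zero]
  rw [Finset.sum_congr rfl (fun σ _ => h3 σ)] at h2
  rw [Finset.sum_filter]
  exact h2

lemma eq_zero_of_colorable_support (b : Module.Basis (Fin n) K W) (a : MonoidAlgebra K (Equiv.Perm (Fin p)))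
    (hsupp : ∀ σ ∈ a.coeff.support, IsColorable n σ)
    (ha : permAlgHom K W p a = 0) : a = 0 := by
  classical
  by_contra h0
  have hne : a.coeff.support.Nonempty :=
    Finsupp.support_nonempty_iff.mpr (fun h => h0 (MonoidAlgebra.coeff_eq_zero.mp h))
  obtain ⟨σ₀, hσ₀mem, hmax⟩ := Finset.exists_max_image a.coeff.support lexVal hne
  obtain ⟨f, hf⟩ := hsupp σ₀ hσ₀mem
  have hc := kernel_coords b a ha f (f ∘ ⇑σ₀⁻¹)
  have hsum : ∑ σ ∈ Finset.univ.filter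
      (fun σ : Equiv.Perm (Fin p) => f ∘ ⇑σ⁻¹ = f ∘ ⇑σ₀⁻¹), a.coeff σ = a.coeff σ₀ := by
    apply Finset.sum_eq_single_of_mem
    · rw [Finset.mem_filter]; exact ⟨Finset.mem_univ _, rfl⟩
    · intro σ hσ hneq
      rw [Finset.mem_filter] at hσ
      have hcond : ∀ v, f (σ⁻¹ v) = f (σ₀⁻¹ v) := fun v => congrFun hσ.2 v
      obtain ⟨i, hagree, hlt⟩ := coset_lex σ₀ σ f hf hcond hneq
      have hlex : lexVal σ₀ < lexVal σ :=
        lexVal_lt σ₀ σ i (fun j hj => (hagree j hj).symm) hlt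
      by_contra hnz
      exact absurd (hmax σ (Finsupp.mem_support_iff.mpr hnz)) (not_le.mpr hlex)
  rw [hsum] at hc
  exact Finsupp.mem_support_iff.mp hσ₀mem hc

end SWaux2

namespace SWaux3
open SWaux SWaux2

variable {K : Type u} [Field K] {n p : ℕ}

lemma via_mul {m : ℕ} (f : Fin m ↪ Fin p) (σ τ : Equiv.Perm (Fin m)) :
    (σ * τ).viaFintypeEmbedding f = σ.viaFintypeEmbedding f * τ.viaFintypeEmbedding f := by
  classical
  unfold Equiv.Perm.viaFintypeEmbedding
  exact (Equiv.Perm.extendDomain_mul _ σ τ).symm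

lemma via_one {m : ℕ} (f : Fin m ↪ Fin p) :
    (1 : Equiv.Perm (Fin m)).viaFintypeEmbedding f = 1 := by
  classical
  unfold Equiv.Perm.viaFintypeEmbedding
  exact Equiv.Perm.extendDomain_one _

lemma via_inv {m : ℕ} (f : Fin m ↪ Fin p) (σ : Equiv.Perm (Fin m)) :
    (σ⁻¹).viaFintypeEmbedding f = (σ.viaFintypeEmbedding f)⁻¹ := by
  have h1 := via_mul f σ⁻¹ σ
  rw [inv_mul_cancel, via_one] at h1
  exact eq_inv_of_mul_eq_one_left h1.symm

lemma exists_perm_comp {m : ℕ} (e₁ e₂ : Fin m ↪ Fin p) :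
    ∃ π : Equiv.Perm (Fin p), ∀ k, π (e₁ k) = e₂ k := by
  classical
  have hcard : Fintype.card ↥((Set.range ⇑e₁)ᶜ) = Fintype.card ↥((Set.range ⇑e₂)ᶜ) := by
    rw [Fintype.card_compl_set, Fintype.card_compl_set]
    congr 1
    rw [Set.card_range_of_injective e₁.injective, Set.card_range_of_injective e₂.injective]
  obtain ⟨c⟩ := Fintype.card_eq.mp hcard
  set q1 : Fin m ≃ Set.range ⇑e₁ := Equiv.ofInjective _ e₁.injective with hq1
  set q2 : Fin m ≃ Set.range ⇑e₂ := Equiv.ofInjective _ e₂.injective with hq2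
  refine ⟨(Equiv.Set.sumCompl (Set.range ⇑e₁)).symm.trans
    ((Equiv.sumCongr (q1.symm.trans q2) c).trans (Equiv.Set.sumCompl (Set.range ⇑e₂))), ?_⟩
  intro k
  simp only [Equiv.trans_apply]
  rw [Equiv.Set.sumCompl_symm_apply_of_mem (Set.mem_range_self k)]
  simp only [Equiv.sumCongr_apply, Sum.map_inl, Equiv.trans_apply]
  have : q1.symm ⟨e₁ k, Set.mem_range_self k⟩ = k := by
    rw [hq1]
    exact Equiv.ofInjective_symm_apply _ _
  rw [this]
  rw [hq2]
  rw [show (Equiv.ofInjective ⇑e₂ e₂.injective) k = ⟨e₂ k, Set.mem_range_self k⟩ from rfl]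
  exact Equiv.Set.sumCompl_apply_inl _ _

lemma via_conj {m : ℕ} (π : Equiv.Perm (Fin p)) (e₁ e₂ : Fin m ↪ Fin p)
    (hπ : ∀ k, π (e₁ k) = e₂ k) (τ : Equiv.Perm (Fin m)) :
    π * τ.viaFintypeEmbedding e₁ * π⁻¹ = τ.viaFintypeEmbedding e₂ := by
  classical
  ext x
  simp only [Equiv.Perm.mul_apply]
  by_cases hx : x ∈ Set.range ⇑e₂
  · obtain ⟨k, rfl⟩ := hx
    have h1 : π⁻¹ (e₂ k) = e₁ k := by rw [← hπ k, Equiv.Perm.inv_def, Equiv.symm_apply_apply]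
    rw [h1, Equiv.Perm.viaFintypeEmbedding_apply_image, hπ,
      Equiv.Perm.viaFintypeEmbedding_apply_image]
  · have hx1 : π⁻¹ x ∉ Set.range ⇑e₁ := by
      rintro ⟨k, hk⟩
      exact hx ⟨k, by rw [← hπ k, hk, Equiv.Perm.inv_def, Equiv.apply_symm_apply]⟩
    rw [Equiv.Perm.viaFintypeEmbedding_apply_notMem_range _ _ hx1,
      Equiv.Perm.viaFintypeEmbedding_apply_notMem_range _ _ hx,
      Equiv.Perm.inv_def, Equiv.apply_symm_apply]

variable (K) in
/-- The (unnormalized) antisymmetrizer over the image of an embedding. -/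
noncomputable def aS (s : Fin (n + 1) ↪ Fin p) : MonoidAlgebra K (Equiv.Perm (Fin p)) :=
  ∑ τ : Equiv.Perm (Fin (n + 1)),
    ((Equiv.Perm.sign τ : ℤ) : K) • MonoidAlgebra.single (τ.viaFintypeEmbedding s) (1 : K)

lemma aS_castLE [CharZero K] (h : n + 1 ≤ p) :
    aS K (Fin.castLEEmb h) = ((Nat.factorial (n + 1) : K)) • antisymmetrizer K n p h := by
  rw [antisymmetrizer, smul_smul, mul_inv_cancel₀
    (Nat.cast_ne_zero.mpr (Nat.factorial_ne_zero (n+1)) : ((Nat.factorial (n+1) : K) ≠ 0)),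
    one_smul]
  rfl

lemma aS_mem [CharZero K] (h : n + 1 ≤ p) (s : Fin (n + 1) ↪ Fin p) :
    aS K s ∈ TwoSidedIdeal.span {antisymmetrizer K n p h} := by
  classical
  obtain ⟨π, hπ⟩ := exists_perm_comp (Fin.castLEEmb h) s
  have hconj : MonoidAlgebra.single π (1:K) * aS K (Fin.castLEEmb h)
      * MonoidAlgebra.single π⁻¹ (1:K) = aS K s := by
    rw [aS, Finset.mul_sum, Finset.sum_mul, aS]
    apply Finset.sum_congr rfl
    intro τ _
    rw [mul_smul_comm, smul_mul_assoc, MonoidAlgebra.single_mul_single,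
      MonoidAlgebra.single_mul_single, one_mul, one_mul,
      via_conj π _ s hπ τ]
  rw [← hconj, aS_castLE h]
  apply TwoSidedIdeal.mul_mem_right
  apply TwoSidedIdeal.mul_mem_left
  rw [Algebra.smul_def]
  apply TwoSidedIdeal.mul_mem_left
  exact TwoSidedIdeal.subset_span (Set.mem_singleton _)

lemma lexVal_mul_lt (σ : Equiv.Perm (Fin p)) (s : Fin (n + 1) → Fin p) (hs : StrictMono s)
    (hdec : ∀ a b : Fin (n + 1), a < b → σ (s b) < σ (s a)) (τ : Equiv.Perm (Fin (n + 1)))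
    (hτ : τ ≠ 1) :
    lexVal (σ * τ.viaFintypeEmbedding ⟨s, hs.injective⟩) < lexVal σ := by
  classical
  set e : Fin (n + 1) ↪ Fin p := ⟨s, hs.injective⟩ with he
  set τ' := τ.viaFintypeEmbedding e with hτ'
  have hM : (Finset.univ.filter (fun j : Fin p => τ' j ≠ j)).Nonempty := by
    obtain ⟨k, hk⟩ : ∃ k, τ k ≠ k := by
      by_contra hc
      push_neg at hc
      exact hτ (Equiv.ext hc)
    refine ⟨s k, Finset.mem_filter.mpr ⟨Finset.mem_univ _, ?_⟩⟩
    rw [hτ', show s k = e k from rfl, Equiv.Perm.viaFintypeEmbedding_apply_image]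
    intro hcontra
    exact hk (hs.injective hcontra)
  set i := (Finset.univ.filter (fun j : Fin p => τ' j ≠ j)).min' hM with hi
  have hi_mem2 : τ' i ≠ i := by
    have hmm := Finset.min'_mem _ hM
    rw [Finset.mem_filter] at hmm
    exact hmm.2
  have hfix : ∀ j : Fin p, j < i → τ' j = j := by
    intro j hj
    by_contra hne
    exact absurd (Finset.min'_le _ j (Finset.mem_filter.mpr ⟨Finset.mem_univ _, hne⟩))
      (not_le.mpr hj)
  have hi_range : i ∈ Set.range ⇑e := by
    by_contra hr
    exact hi_mem2 (Equiv.Perm.viaFintypeEmbedding_apply_notMem_range _ _ hr)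
  obtain ⟨k, hk⟩ := hi_range
  have hτk : τ k ≠ k := by
    intro hc
    apply hi_mem2
    rw [← hk, hτ', Equiv.Perm.viaFintypeEmbedding_apply_image, hc]
  have hklt : k < τ k := by
    rcases lt_or_gt_of_ne (Ne.symm hτk) with hgt | hlt
    · exact hgt
    · exfalso
      have h1 : s (τ k) < i := by rw [← hk]; exact hs hlt
      have h2 : τ' (s (τ k)) = s (τ k) := hfix _ h1
      have h3 : τ' i = s (τ k) := by
        rw [← hk, hτ', Equiv.Perm.viaFintypeEmbedding_apply_image]; rfl
      have := τ'.injective (h3.trans h2.symm)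
      rw [this] at h1
      exact lt_irrefl _ h1
  apply lexVal_lt _ _ i
  · intro j hj
    rw [Equiv.Perm.mul_apply, hfix j hj]
  · rw [Equiv.Perm.mul_apply]
    have h3 : τ' i = s (τ k) := by
      rw [← hk, hτ', Equiv.Perm.viaFintypeEmbedding_apply_image]; rfl
    rw [h3, ← hk]
    exact hdec k (τ k) hklt

variable (K) in
noncomputable def idealSubmodule (I : TwoSidedIdeal (MonoidAlgebra K (Equiv.Perm (Fin p)))) :
    Submodule K (MonoidAlgebra K (Equiv.Perm (Fin p))) where
  carrier := I
  add_mem' := I.add_mem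
  zero_mem' := I.zero_mem
  smul_mem' := fun c x hx => by
    rw [Algebra.smul_def]
    exact I.mul_mem_left _ _ hx

lemma mem_idealSubmodule {I : TwoSidedIdeal (MonoidAlgebra K (Equiv.Perm (Fin p)))}
    {x : MonoidAlgebra K (Equiv.Perm (Fin p))} : x ∈ idealSubmodule K I ↔ x ∈ I := Iff.rfl

lemma single_mul_aS (σ : Equiv.Perm (Fin p)) (s : Fin (n + 1) ↪ Fin p) :
    MonoidAlgebra.single σ (1:K) * aS K s
      = ∑ τ : Equiv.Perm (Fin (n + 1)),
          ((Equiv.Perm.sign τ : ℤ) : K) •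
            MonoidAlgebra.single (σ * τ.viaFintypeEmbedding s) (1 : K) := by
  rw [aS, Finset.mul_sum]
  apply Finset.sum_congr rfl
  intro τ _
  rw [mul_smul_comm, MonoidAlgebra.single_mul_single, one_mul]

lemma single_mem_sup [CharZero K] (h : n + 1 ≤ p) (σ : Equiv.Perm (Fin p)) :
    MonoidAlgebra.single σ (1:K) ∈
      idealSubmodule K (TwoSidedIdeal.span {antisymmetrizer K n p h})
        ⊔ MonoidAlgebra.supported K K {σ : Equiv.Perm (Fin p) | IsColorable n σ} := by
  classical
  set P := idealSubmodule K (TwoSidedIdeal.span {antisymmetrizer K n p h})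
    ⊔ MonoidAlgebra.supported K K {σ : Equiv.Perm (Fin p) | IsColorable n σ} with hPdef
  suffices hN : ∀ N : ℕ, ∀ σ : Equiv.Perm (Fin p), lexVal σ < N →
      MonoidAlgebra.single σ (1:K) ∈ P by
    exact hN (lexVal σ + 1) σ (Nat.lt_succ_self _)
  intro N
  induction N with
  | zero => intro σ hσ; omega
  | succ N ih =>
    intro σ hσ
    rcases colorable_or_decreasing n σ with hcol | ⟨s, hs, hdec⟩
    · apply Submodule.mem_sup_right
      rw [MonoidAlgebra.mem_supported]
      intro x hx
      have := Finsupp.support_single_subset hx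
      rw [Finset.mem_singleton] at this
      rw [this]
      exact hcol
    · have key := single_mul_aS (K := K) σ ⟨s, hs.injective⟩
      rw [← Finset.add_sum_erase _ _ (Finset.mem_univ (1 : Equiv.Perm (Fin (n+1))))] at key
      rw [via_one, mul_one, map_one] at key
      simp only [Units.val_one, Int.cast_one, one_smul] at key
      have keq : MonoidAlgebra.single σ (1:K)
          = MonoidAlgebra.single σ (1:K) * aS K ⟨s, hs.injective⟩
            - ∑ τ ∈ Finset.univ.erase (1 : Equiv.Perm (Fin (n+1))),
                ((Equiv.Perm.sign τ : ℤ) : K) •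
                  MonoidAlgebra.single (σ * τ.viaFintypeEmbedding ⟨s, hs.injective⟩) (1 : K) := by
        rw [key, add_sub_cancel_right]
      rw [keq]
      apply Submodule.sub_mem
      · apply Submodule.mem_sup_left
        rw [mem_idealSubmodule]
        exact TwoSidedIdeal.mul_mem_left _ _ _ (aS_mem h ⟨s, hs.injective⟩)
      · apply Submodule.sum_mem
        intro τ hτ
        apply Submodule.smul_mem
        apply ih
        have hlt := lexVal_mul_lt σ s hs hdec τ (Finset.ne_of_mem_erase hτ)
        omega

end SWaux3

namespace SWaux4
open SWaux SWaux2 SWaux3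

variable {K : Type u} [Field K] {W : Type u} [AddCommGroup W] [Module K W] {n p : ℕ}

lemma phi_single (g : Equiv.Perm (Fin p)) (c : K) :
    permAlgHom K W p (MonoidAlgebra.single g c) = c • permRep K W p g := by
  rw [permAlgHom]
  exact MonoidAlgebra.lift_single _ _ _

lemma tprod_expand (b : Module.Basis (Fin n) K W) (v : Fin p → W) :
    PiTensorProduct.tprod K v = ∑ f : Fin p → Fin n,
      (∏ i, b.repr (v i) (f i)) • PiTensorProduct.tprod K (fun i => b (f i)) := by
  classical
  have hv : v = fun i => ∑ j : Fin n, (b.repr (v i) j) • b j := by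
    funext i
    exact (Module.Basis.sum_repr b (v i)).symm
  conv_lhs => rw [hv]
  rw [MultilinearMap.map_sum (PiTensorProduct.tprod K)
    (g := fun i j => (b.repr (v i) j) • b j)]
  apply Finset.sum_congr rfl
  intro f _
  exact MultilinearMap.map_smul_univ _ _ _

lemma phi_aS_tprod_basis (b : Module.Basis (Fin n) K W) (s : Fin (n + 1) ↪ Fin p)
    (f : Fin p → Fin n) :
    permAlgHom K W p (aS K s) (PiTensorProduct.tprod K (fun i => b (f i))) = 0 := by
  classical
  rw [aS, map_sum, LinearMap.sum_apply]
  have hterm : ∀ τ : Equiv.Perm (Fin (n + 1)),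
      (permAlgHom K W p (((Equiv.Perm.sign τ : ℤ) : K) •
        MonoidAlgebra.single (τ.viaFintypeEmbedding s) (1 : K)))
        (PiTensorProduct.tprod K (fun i => b (f i)))
      = ((Equiv.Perm.sign τ : ℤ) : K) •
          PiTensorProduct.tprod K ((fun i => b (f i)) ∘ ⇑(τ.viaFintypeEmbedding s)⁻¹) := by
    intro τ
    rw [map_smul, phi_single, one_smul, LinearMap.smul_apply, permRep_tprod]
  rw [Finset.sum_congr rfl (fun τ _ => hterm τ)]
  -- pigeonhole: two letters with the same color
  obtain ⟨k, l, hkl, heq⟩ := Fintype.exists_ne_map_eq_of_card_lt (f ∘ ⇑s) (by simp)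
  apply Finset.sum_ninvolution (fun τ => τ * Equiv.swap k l)
  · intro τ
    have hsign : ((Equiv.Perm.sign (τ * Equiv.swap k l) : ℤ) : K)
        = -((Equiv.Perm.sign τ : ℤ) : K) := by
      rw [Equiv.Perm.sign_mul, Equiv.Perm.sign_swap hkl]
      push_cast
      ring
    have hswap : ∀ y : Fin p, f ((Equiv.swap k l).viaFintypeEmbedding s y) = f y := by
      intro y
      by_cases hy : y ∈ Set.range ⇑s
      · obtain ⟨m, rfl⟩ := hy
        rw [Equiv.Perm.viaFintypeEmbedding_apply_image]
        rcases eq_or_ne m k with rfl | hmk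
        · rw [Equiv.swap_apply_left]
          exact (heq).symm
        · rcases eq_or_ne m l with rfl | hml
          · rw [Equiv.swap_apply_right]
            exact heq
          · rw [Equiv.swap_apply_of_ne_of_ne hmk hml]
      · rw [Equiv.Perm.viaFintypeEmbedding_apply_notMem_range _ _ hy]
    have htens : (fun i => b (f i)) ∘ ⇑((τ * Equiv.swap k l).viaFintypeEmbedding s)⁻¹
        = (fun i => b (f i)) ∘ ⇑(τ.viaFintypeEmbedding s)⁻¹ := by
      funext y
      simp only [Function.comp_apply]
      congr 1
      have h1 : ((τ * Equiv.swap k l).viaFintypeEmbedding s)⁻¹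
          = (Equiv.swap k l).viaFintypeEmbedding s * (τ.viaFintypeEmbedding s)⁻¹ := by
        rw [← via_inv, mul_inv_rev, Equiv.swap_inv, via_mul, via_inv]
      rw [h1, Equiv.Perm.mul_apply, hswap]
    rw [htens, hsign, neg_smul, add_neg_cancel]
  · intro τ _
    intro hcontra
    have h1 : τ * Equiv.swap k l = τ * 1 := by rw [mul_one]; exact hcontra
    have h2 : Equiv.swap k l = 1 := mul_left_cancel h1
    have hk : Equiv.swap k l k = k := by rw [h2]; rfl
    rw [Equiv.swap_apply_left] at hk
    exact hkl hk.symm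
  · intro τ
    exact Finset.mem_univ _
  · intro τ
    rw [mul_assoc, Equiv.swap_mul_self, mul_one]

lemma phi_aS_zero (b : Module.Basis (Fin n) K W) (s : Fin (n + 1) ↪ Fin p) :
    permAlgHom K W p (aS K s) = 0 := by
  classical
  have htp : ∀ v : Fin p → W, permAlgHom K W p (aS K s) (PiTensorProduct.tprod K v) = 0 := by
    intro v
    rw [tprod_expand b v, map_sum]
    apply Finset.sum_eq_zero
    intro f _
    rw [map_smul, phi_aS_tprod_basis b s f, smul_zero]
  apply LinearMap.ext
  intro x
  rw [LinearMap.zero_apply]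
  have hx : x ∈ (⊤ : Submodule K (⨂[K] (_ : Fin p), W)) := Submodule.mem_top
  rw [← PiTensorProduct.span_tprod_eq_top] at hx
  refine Submodule.span_induction ?_ ?_ ?_ ?_ hx
  · rintro y ⟨v, rfl⟩
    exact htp v
  · exact map_zero _
  · intro y z _ _ hy hz
    rw [map_add, hy, hz, add_zero]
  · intro c y _ hy
    rw [map_smul, hy, smul_zero]

lemma phi_antisym_zero [CharZero K] (b : Module.Basis (Fin n) K W) (h : n + 1 ≤ p) :
    permAlgHom K W p (antisymmetrizer K n p h) = 0 := by
  have h1 : antisymmetrizer K n p h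
      = ((Nat.factorial (n + 1) : K))⁻¹ • aS K (Fin.castLEEmb h) := by
    rw [aS_castLE h, smul_smul, inv_mul_cancel₀
      (Nat.cast_ne_zero.mpr (Nat.factorial_ne_zero (n+1)) : ((Nat.factorial (n+1) : K) ≠ 0)),
      one_smul]
  rw [h1, map_smul, phi_aS_zero b (Fin.castLEEmb h), smul_zero]

lemma span_le_ker [CharZero K] (b : Module.Basis (Fin n) K W) (h : n + 1 ≤ p)
    (x : MonoidAlgebra K (Equiv.Perm (Fin p)))
    (hx : x ∈ TwoSidedIdeal.span {antisymmetrizer K n p h}) :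
    permAlgHom K W p x = 0 := by
  rw [TwoSidedIdeal.mem_span_iff] at hx
  have hmem := hx (TwoSidedIdeal.ker (permAlgHom K W p)) ?_
  · rwa [TwoSidedIdeal.mem_ker] at hmem
  · intro y hy
    rw [Set.mem_singleton_iff] at hy
    subst hy
    rw [SetLike.mem_coe, TwoSidedIdeal.mem_ker]
    exact phi_antisym_zero b h

end SWaux4


/-- `φ_p : K[S_p] → End(W^{⊗p})` is injective when `p ≤ n = dim W`, and for
`p > n` its kernel is the two-sided ideal generated by the antisymmetrizer `A_{n+1}`. -/
theorem permAlgHom_injective_or_kernel_antisymmetrizer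
    (K : Type u) [Field K] [IsAlgClosed K] [CharZero K]
    (W : Type u) [AddCommGroup W] [Module K W] [FiniteDimensional K W]
    (n : ℕ) (hn : Module.finrank K W = n) (p : ℕ) :
    (p ≤ n → Function.Injective (permAlgHom K W p)) ∧
    (∀ h : n + 1 ≤ p, ∀ a : MonoidAlgebra K (Equiv.Perm (Fin p)),
      permAlgHom K W p a = 0 ↔ a ∈ TwoSidedIdeal.span {antisymmetrizer K n p h}) := by
  classical
  have b : Module.Basis (Fin n) K W := Module.finBasisOfFinrankEq K W hn
  constructor
  · intro hp
    rw [injective_iff_map_eq_zero]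
    intro a ha
    apply SWaux2.eq_zero_of_colorable_support b a _ ha
    intro σ _
    refine ⟨fun i => ⟨(i : ℕ), lt_of_lt_of_le i.isLt hp⟩, ?_⟩
    intro i j hij hval
    exfalso
    simp only [Fin.mk.injEq] at hval
    exact (ne_of_lt hij) (Fin.ext hval)
  · intro h a
    constructor
    · intro ha
      have hmem : a ∈ SWaux3.idealSubmodule K (TwoSidedIdeal.span {antisymmetrizer K n p h})
          ⊔ MonoidAlgebra.supported K K {σ : Equiv.Perm (Fin p) | SWaux.IsColorable n σ} := by
        have : a = a.coeff.sum (fun σ c => MonoidAlgebra.single σ c) := (MonoidAlgebra.sum_coeff_single a).symm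
        rw [this, Finsupp.sum]
        apply Submodule.sum_mem
        intro σ _
        have h2 : MonoidAlgebra.single σ (a.coeff σ) = (a.coeff σ) • MonoidAlgebra.single σ (1 : K) := by
          rw [MonoidAlgebra.smul_single', mul_one]
        rw [h2]
        exact Submodule.smul_mem _ _ (SWaux3.single_mem_sup h σ)
      obtain ⟨x, hxI, y, hy, hxy⟩ := Submodule.mem_sup.mp hmem
      have hφx : permAlgHom K W p x = 0 :=
        SWaux4.span_le_ker b h x (SWaux3.mem_idealSubmodule.mp hxI)
      have hφy : permAlgHom K W p y = 0 := by
        have : y = a - x := by rw [← hxy]; exact (add_sub_cancel_left x y).symm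
        rw [this, map_sub, ha, hφx, sub_zero]
      have hy0 : y = 0 := by
        apply SWaux2.eq_zero_of_colorable_support b y _ hφy
        intro σ hσ
        exact MonoidAlgebra.mem_supported.mp hy hσ
      rw [← hxy, hy0, add_zero]
      exact SWaux3.mem_idealSubmodule.mp hxI
    · intro hx
      exact SWaux4.span_le_ker b h a hx
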